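/- The spinorial conjugation operator C on the spinor space S, defined by C(ψ) = (−1)^{k(k+1)/2} ⋆_S(ψ̄) for ψ of degree k (where ⋆_S is the Hodge star on S = Λ(V_+) and the bar is complex conjugation fixing the basis vectors σ_I), anticommutes with each gamma operator: C γ_i + γ_i C = 0 for all i ∈ {1,…,n}. -/

import Mathlib

noncomputable section

/-- The spinor space `S = Λ(V₊)`, `V₊ ≅ ℂʳ`, modelled by its basis of
multivectors `σ_I = ∏_{j ∈ I} (e_{2j-1} + i e_{2j})/√2`, `I ⊆ {1,…,r}`. -/
abbrev Spinor (r : ℕ) := Finset (Fin r) →₀ ℂ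

/-- The sign `(-1)^{#{i ∈ I : i < j}}` arising when wedging `σ_j` into `σ_I`. -/
def spinSgn {r : ℕ} (I : Finset (Fin r)) (j : Fin r) : ℂ :=
  (-1) ^ (I.filter (fun i => i < j)).card

/-- The creation operator (wedging with the basis vector of `V₊` numbered `j`). -/
def creation {r : ℕ} (j : Fin r) : Spinor r →ₗ[ℂ] Spinor r :=
  Finsupp.lsum ℂ fun I => LinearMap.toSpanSingleton ℂ (Spinor r)
    (if j ∈ I then 0 else spinSgn I j • Finsupp.single (insert j I) 1)

/-- The annihilation operator (contraction with the dual basis vector of `V₋`). -/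
def annihilation {r : ℕ} (j : Fin r) : Spinor r →ₗ[ℂ] Spinor r :=
  Finsupp.lsum ℂ fun I => LinearMap.toSpanSingleton ℂ (Spinor r)
    (if j ∈ I then spinSgn I j • Finsupp.single (I.erase j) 1 else 0)

/-- The Clifford action of the basis vector `e_i` of `ℂⁿ`, `n = 2r`, on `S`:
`x·ξ = x₊ ∧ ξ + x₋ ⨼ ξ` gives `γ_{2j-1} = a_j + a_j†` and `γ_{2j} = i(a_j† - a_j)`
in terms of creation/annihilation operators. -/
def gammaOp {r : ℕ} (i : Fin (2 * r)) : Spinor r →ₗ[ℂ] Spinor r :=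
  if (i : ℕ) % 2 = 0 then
    creation ⟨(i : ℕ) / 2, by have := i.isLt; omega⟩
      + annihilation ⟨(i : ℕ) / 2, by have := i.isLt; omega⟩
  else
    Complex.I • (annihilation ⟨(i : ℕ) / 2, by have := i.isLt; omega⟩
      - creation ⟨(i : ℕ) / 2, by have := i.isLt; omega⟩)

/-- The scalar product on `S` making the basis spinors `σ_I` orthonormal
(conjugate-linear in the first argument). -/
def spinInner {r : ℕ} (f g : Spinor r) : ℂ :=
  f.sum fun I c => (starRingEnd ℂ) c * g I

/-- The number of inversions of the shuffle `(I, Iᶜ)`, whose parity is the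
Hodge-star sign: `⋆_S σ_I = (-1)^{shuffleInversions I} σ_{Iᶜ}`. -/
def shuffleInversions {r : ℕ} (I : Finset (Fin r)) : ℕ :=
  ∑ i ∈ I, ((Iᶜ).filter (fun j => j < i)).card


variable {r : ℕ}

lemma creation_single (j : Fin r) (I : Finset (Fin r)) (c : ℂ) :
    creation j (Finsupp.single I c)
      = if j ∈ I then 0 else Finsupp.single (insert j I) (c * spinSgn I j) := by
  simp only [creation, Finsupp.lsum_single, LinearMap.toSpanSingleton_apply]
  split
  · simp
  · rw [smul_smul, Finsupp.smul_single, smul_eq_mul, mul_one]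

lemma annihilation_single (j : Fin r) (I : Finset (Fin r)) (c : ℂ) :
    annihilation j (Finsupp.single I c)
      = if j ∈ I then Finsupp.single (I.erase j) (c * spinSgn I j) else 0 := by
  simp only [annihilation, Finsupp.lsum_single, LinearMap.toSpanSingleton_apply]
  split
  · rw [smul_smul, Finsupp.smul_single, smul_eq_mul, mul_one]
  · simp

/-- abbreviation for the conjugation sign ε(I) -/
def eps (I : Finset (Fin r)) : ℂ :=
  (-1 : ℂ) ^ (I.card * (I.card + 1) / 2) * (-1 : ℂ) ^ shuffleInversions I

lemma compl_insert' (j : Fin r) (I : Finset (Fin r)) : (insert j I)ᶜ = Iᶜ.erase j := by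
  ext x; simp [Finset.mem_erase, and_comm]

lemma filter_erase_lt (j : Fin r) (S : Finset (Fin r)) :
    (S.erase j).filter (fun x => x < j) = S.filter (fun x => x < j) := by
  ext x
  simp only [Finset.mem_filter, Finset.mem_erase]
  constructor
  · rintro ⟨⟨_, hx⟩, h⟩; exact ⟨hx, h⟩
  · rintro ⟨hx, h⟩; exact ⟨⟨ne_of_lt h, hx⟩, h⟩

lemma spinSgn_insert (j : Fin r) (I : Finset (Fin r)) :
    spinSgn (insert j I) j = spinSgn I j := by
  unfold spinSgn
  rw [Finset.filter_insert, if_neg (lt_irrefl j)]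

lemma spinSgn_erase (j : Fin r) (S : Finset (Fin r)) :
    spinSgn (S.erase j) j = spinSgn S j := by
  unfold spinSgn
  rw [filter_erase_lt]

lemma inv_insert (j : Fin r) (I : Finset (Fin r)) (hj : j ∉ I) :
    shuffleInversions (insert j I) + (I.filter (fun i => j < i)).card
      = shuffleInversions I + ((Iᶜ).filter (fun i => i < j)).card := by
  unfold shuffleInversions
  rw [Finset.sum_insert hj, compl_insert', filter_erase_lt]
  have h2 : ∀ i ∈ I, (((Iᶜ).erase j).filter (fun x => x < i)).card
      + (if j < i then 1 else 0) = ((Iᶜ).filter (fun x => x < i)).card := by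
    intro i hi
    have he : ((Iᶜ).erase j).filter (fun x => x < i)
        = ((Iᶜ).filter (fun x => x < i)).erase j := by
      ext x; simp only [Finset.mem_filter, Finset.mem_erase]; tauto
    rw [he]
    by_cases hji : j < i
    · have hmem : j ∈ (Iᶜ).filter (fun x => x < i) := by
        simp [Finset.mem_filter, Finset.mem_compl, hj, hji]
      rw [Finset.card_erase_of_mem hmem, if_pos hji]
      have := Finset.card_pos.2 ⟨j, hmem⟩
      omega
    · rw [Finset.erase_eq_of_notMem (by simp [Finset.mem_filter, hji]), if_neg hji, add_zero]
  have hsum := Finset.sum_congr rfl h2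
  rw [Finset.sum_add_distrib] at hsum
  have hcf : (I.filter (fun i => j < i)).card = ∑ i ∈ I, if j < i then 1 else 0 :=
    Finset.card_filter _ _
  omega

lemma neg_pow_sum (A B : ℕ) (h : (A + B) % 2 = 1) : (-1 : ℂ) ^ A + (-1 : ℂ) ^ B = 0 := by
  rcases Nat.even_or_odd A with hA | hA
  · have hA2 := Nat.even_iff.1 hA
    rw [hA.neg_one_pow, (Nat.odd_iff.2 (by omega) : Odd B).neg_one_pow]; ring
  · have hA2 := Nat.odd_iff.1 hA
    rw [hA.neg_one_pow, (Nat.even_iff.2 (by omega) : Even B).neg_one_pow]; ring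

lemma T_succ (k : ℕ) : (k + 1) * (k + 1 + 1) / 2 = k * (k + 1) / 2 + (k + 1) := by
  have hm : (k + 1) * (k + 1 + 1) = k * (k + 1) + 2 * (k + 1) := by ring
  have he : k * (k + 1) % 2 = 0 := Nat.even_iff.1 (Nat.even_mul_succ_self k)
  omega

lemma filter_lt_add_gt (j : Fin r) (I : Finset (Fin r)) (hj : j ∉ I) :
    (I.filter (fun i => i < j)).card + (I.filter (fun i => j < i)).card = I.card := by
  have h := Finset.card_filter_add_card_filter_not (s := I) (p := fun i => i < j)
  have hfe : I.filter (fun i => j < i) = I.filter (fun i => ¬ i < j) := by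
    apply Finset.filter_congr
    intro i hi
    simp only [not_lt, eq_iff_iff]
    constructor
    · exact le_of_lt
    · intro hle; exact lt_of_le_of_ne hle (fun he => hj (he ▸ hi))
  rw [hfe]
  exact h

lemma key (j : Fin r) (I : Finset (Fin r)) (hj : j ∉ I) :
    spinSgn I j * eps (insert j I) + eps I * spinSgn (Iᶜ) j = 0 := by
  unfold eps spinSgn
  rw [Finset.card_insert_of_notMem hj]
  have hT := T_succ I.card
  have hinv := inv_insert j I hj
  have hac := filter_lt_add_gt j I hj
  rw [← pow_add, ← pow_add, ← pow_add, ← pow_add]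
  apply neg_pow_sum
  omega

lemma neg_one_pow_mul_self (n : ℕ) : (-1 : ℂ) ^ n * (-1 : ℂ) ^ n = 1 := by
  rw [← pow_add]
  exact (Even.add_self n).neg_one_pow

lemma eps_sq (I : Finset (Fin r)) : eps I * eps I = 1 := by
  unfold eps
  rw [mul_mul_mul_comm, neg_one_pow_mul_self, neg_one_pow_mul_self, one_mul]

lemma compl_erase' (j : Fin r) (I : Finset (Fin r)) : (I.erase j)ᶜ = insert j (Iᶜ) := by
  ext x
  simp only [Finset.mem_compl, Finset.mem_erase, Finset.mem_insert, not_and_or, not_not]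

lemma spinSgn_insert' (j : Fin r) (S : Finset (Fin r)) :
    spinSgn (insert j S) j = spinSgn S j := spinSgn_insert j S

lemma key' (j : Fin r) (I : Finset (Fin r)) (hj : j ∈ I) :
    spinSgn I j * eps (I.erase j) + eps I * spinSgn (Iᶜ) j = 0 := by
  have h := key j (I.erase j) (Finset.notMem_erase j I)
  rw [Finset.insert_erase hj, spinSgn_erase, compl_erase', spinSgn_insert] at h
  have hsq1 := eps_sq I
  have hsq2 := eps_sq (I.erase j)
  linear_combination (eps I * eps (I.erase j)) * h
    - (spinSgn I j * eps (I.erase j)) * hsq1 - (eps I * spinSgn (Iᶜ) j) * hsq2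

lemma conj_spinSgn (I : Finset (Fin r)) (j : Fin r) :
    (starRingEnd ℂ) (spinSgn I j) = spinSgn I j := by
  simp [spinSgn, map_pow]

lemma gammaOp_even (i : Fin (2 * r)) (hpar : (i : ℕ) % 2 = 0) (h : (i : ℕ) / 2 < r) :
    gammaOp i = creation ⟨(i : ℕ) / 2, h⟩ + annihilation ⟨(i : ℕ) / 2, h⟩ := by
  unfold gammaOp; rw [if_pos hpar]

lemma gammaOp_odd (i : Fin (2 * r)) (hpar : ¬ (i : ℕ) % 2 = 0) (h : (i : ℕ) / 2 < r) :
    gammaOp i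
      = Complex.I • (annihilation ⟨(i : ℕ) / 2, h⟩ - creation ⟨(i : ℕ) / 2, h⟩) := by
  unfold gammaOp; rw [if_neg hpar]

lemma base {C : Spinor r → Spinor r}
    (hC : ∀ (I : Finset (Fin r)) (c : ℂ), C (Finsupp.single I c)
        = eps I • Finsupp.single (Iᶜ) ((starRingEnd ℂ) c))
    (i : Fin (2 * r)) (I : Finset (Fin r)) (c : ℂ) :
    C (gammaOp i (Finsupp.single I c)) + gammaOp i (C (Finsupp.single I c)) = 0 := by
  have h2 : (i : ℕ) / 2 < r := by have := i.isLt; omega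
  by_cases hpar : (i : ℕ) % 2 = 0
  · obtain ⟨j, hj⟩ : ∃ j : Fin r, gammaOp i = creation j + annihilation j :=
      ⟨_, gammaOp_even i hpar h2⟩
    rw [hj]
    by_cases hji : j ∈ I
    · have hjc : j ∉ (Iᶜ) := by simp [hji]
      simp only [LinearMap.add_apply, creation_single, annihilation_single, hji, hjc,
        if_true, if_false, hC, map_smul, zero_add, add_zero, smul_zero, Finsupp.smul_single',
        map_mul, conj_spinSgn, compl_erase', compl_insert']
      rw [← Finsupp.single_add, Finsupp.single_eq_zero]
      linear_combination ((starRingEnd ℂ) c) * key' j I hji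
    · have hjc : j ∈ (Iᶜ) := by simp [hji]
      simp only [LinearMap.add_apply, creation_single, annihilation_single, hji, hjc,
        if_true, if_false, hC, map_smul, zero_add, add_zero, smul_zero, Finsupp.smul_single',
        map_mul, conj_spinSgn, compl_erase', compl_insert']
      rw [← Finsupp.single_add, Finsupp.single_eq_zero]
      linear_combination ((starRingEnd ℂ) c) * key j I hji
  · obtain ⟨j, hj⟩ : ∃ j : Fin r,
        gammaOp i = Complex.I • (annihilation j - creation j) :=
      ⟨_, gammaOp_odd i hpar h2⟩
    rw [hj]
    by_cases hji : j ∈ I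
    · have hjc : j ∉ (Iᶜ) := by simp [hji]
      simp only [LinearMap.smul_apply, LinearMap.sub_apply, creation_single,
        annihilation_single, hji, hjc, if_true, if_false, hC, map_smul, sub_zero, zero_sub,
        smul_neg, smul_zero, Finsupp.smul_single', map_mul, conj_spinSgn, Complex.conj_I,
        compl_erase', compl_insert', ← Finsupp.single_neg, map_neg, neg_mul, mul_neg, neg_neg]
      rw [← Finsupp.single_add, Finsupp.single_eq_zero]
      linear_combination (-Complex.I * (starRingEnd ℂ) c) * key' j I hji
    · have hjc : j ∈ (Iᶜ) := by simp [hji]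
      simp only [LinearMap.smul_apply, LinearMap.sub_apply, creation_single,
        annihilation_single, hji, hjc, if_true, if_false, hC, map_smul, sub_zero, zero_sub,
        smul_neg, smul_zero, Finsupp.smul_single', map_mul, conj_spinSgn, Complex.conj_I,
        compl_erase', compl_insert', ← Finsupp.single_neg, map_neg, neg_mul, mul_neg, neg_neg]
      rw [← Finsupp.single_add, Finsupp.single_eq_zero]
      linear_combination (Complex.I * (starRingEnd ℂ) c) * key j I hji
/-- **The spinorial conjugation anticommutes with the gamma operators.**
`C(ψ) = (-1)^{k(k+1)/2} ⋆_S(ψ̄)` on degree-`k` spinors — so on a basis multivector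
`σ_I` with `|I| = k`, `C(c • σ_I) = c̄ (-1)^{k(k+1)/2} (-1)^{shuffleInversions I} σ_{Iᶜ}` —
is antilinear and satisfies `C γ_i + γ_i C = 0` for all `i`. -/
theorem conjugation_anticommutes_gamma {r : ℕ}
    (C : Spinor r → Spinor r)
    (hC_add : ∀ ξ ζ, C (ξ + ζ) = C ξ + C ζ)
    (hC_basis : ∀ (I : Finset (Fin r)) (c : ℂ),
      C (Finsupp.single I c)
        = ((-1 : ℂ) ^ (I.card * (I.card + 1) / 2) * (-1 : ℂ) ^ shuffleInversions I)
          • Finsupp.single Iᶜ ((starRingEnd ℂ) c)) :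
    ∀ (i : Fin (2 * r)) (ξ : Spinor r),
      C (gammaOp i ξ) + gammaOp i (C ξ) = 0 := by
  have hC0 : C 0 = 0 := by
    have h := hC_basis ∅ 0
    simpa using h
  have hC : ∀ (I : Finset (Fin r)) (c : ℂ), C (Finsupp.single I c)
      = eps I • Finsupp.single (Iᶜ) ((starRingEnd ℂ) c) := hC_basis
  intro i ξ
  induction ξ using Finsupp.induction with
  | zero => simp [hC0]
  | single_add I c f _ _ ih =>
      rw [map_add, hC_add, hC_add, map_add, add_add_add_comm, ih, add_zero,
        base hC i I c]
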